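/- Let X₋ ∈ ℝ^{n×T}, U₋ ∈ ℝ^{m×T}, X₊ ∈ ℝ^{n×T} be real matrices. Suppose there exist a symmetric positive definite P ∈ ℝ^{n×n}, L ∈ ℝ^{m×n}, and β > 0 such that the 4×4 block matrix [[P−βI, 0, 0, 0],[0, −P, −Lᵀ, 0],[0, −L, 0, L],[0, 0, Lᵀ, P]] + vvᵀ ≥ 0, where v = [X₊; −X₋; −U₋; 0]. Then with K := LP⁻¹, for every pair (A,B) with X₊ = AX₋ + BU₋ one has P − (A+BK)P(A+BK)ᵀ ≥ βI, hence A+BK is Schur stable. -/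

import Mathlib

open Matrix

lemma re_quad {n : ℕ} (S : Matrix (Fin n) (Fin n) ℝ) (x : Fin n → ℂ) :
    (star x ⬝ᵥ (S.map (algebraMap ℝ ℂ) *ᵥ x)).re
      = (fun i => (x i).re) ⬝ᵥ (S *ᵥ fun i => (x i).re)
        + (fun i => (x i).im) ⬝ᵥ (S *ᵥ fun i => (x i).im) := by
  simp only [dotProduct, mulVec, Pi.star_apply, Finset.mul_sum, Complex.re_sum,
    ← Finset.sum_add_distrib]
  refine Finset.sum_congr rfl fun i _ => ?_
  refine Finset.sum_congr rfl fun j _ => ?_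
  simp only [map_apply, Complex.mul_re, Complex.mul_im, RCLike.star_def,
    Complex.conj_re, Complex.conj_im, Complex.ofReal_re, Complex.ofReal_im,
    Complex.coe_algebraMap]
  ring

lemma posdef_cquad {n : ℕ} {S : Matrix (Fin n) (Fin n) ℝ} (hS : S.PosDef)
    {x : Fin n → ℂ} (hx : x ≠ 0) :
    0 < (star x ⬝ᵥ (S.map (algebraMap ℝ ℂ) *ᵥ x)).re := by
  rw [re_quad]
  set a : Fin n → ℝ := fun i => (x i).re with ha
  set b : Fin n → ℝ := fun i => (x i).im with hb
  have hab : a ≠ 0 ∨ b ≠ 0 := by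
    by_contra h
    push_neg at h
    apply hx
    funext i
    have h1 := congrFun h.1 i
    have h2 := congrFun h.2 i
    simp only [ha, hb, Pi.zero_apply] at h1 h2
    exact Complex.ext h1 h2
  have hqa : ∀ v : Fin n → ℝ, (0:ℝ) ≤ v ⬝ᵥ (S *ᵥ v) := by
    intro v
    simpa using hS.posSemidef.dotProduct_mulVec_nonneg v
  have hqp : ∀ v : Fin n → ℝ, v ≠ 0 → (0:ℝ) < v ⬝ᵥ (S *ᵥ v) := by
    intro v hv
    simpa using hS.dotProduct_mulVec_pos hv
  rcases hab with h | h
  · exact add_pos_of_pos_of_nonneg (hqp a h) (hqa b)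
  · exact add_pos_of_nonneg_of_pos (hqa a) (hqp b h)

lemma conj_mem_spectrum {n : ℕ} {N : Matrix (Fin n) (Fin n) ℂ} {μ : ℂ}
    (h : μ ∈ spectrum ℂ N) : (starRingEnd ℂ) μ ∈ spectrum ℂ Nᴴ := by
  rw [spectrum.mem_iff] at h ⊢
  intro hu
  apply h
  rw [Matrix.isUnit_iff_isUnit_det] at hu ⊢
  have key : (algebraMap ℂ (Matrix (Fin n) (Fin n) ℂ) ((starRingEnd ℂ) μ) - Nᴴ)
      = (algebraMap ℂ (Matrix (Fin n) (Fin n) ℂ) μ - N)ᴴ := by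
    rw [conjTranspose_sub, Algebra.algebraMap_eq_smul_one, Algebra.algebraMap_eq_smul_one,
      conjTranspose_smul, conjTranspose_one]
    rfl
  rw [key, det_conjTranspose] at hu
  exact (isUnit_star.mp hu)

lemma exists_eigvec {n : ℕ} {N : Matrix (Fin n) (Fin n) ℂ} {μ : ℂ}
    (h : μ ∈ spectrum ℂ N) : ∃ x : Fin n → ℂ, x ≠ 0 ∧ N *ᵥ x = μ • x := by
  have h' : μ ∈ spectrum ℂ (Matrix.toLinAlgEquiv' N) := by
    rwa [AlgEquiv.spectrum_eq]
  have he : Module.End.HasEigenvalue (Matrix.toLinAlgEquiv' N) μ :=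
    Module.End.hasEigenvalue_iff_mem_spectrum.mpr h'
  obtain ⟨x, hx⟩ := he.exists_hasEigenvector
  refine ⟨x, hx.2, ?_⟩
  exact hx.apply_eq_smul

lemma map_ct {n : ℕ} (M : Matrix (Fin n) (Fin n) ℝ) :
    (M.map (algebraMap ℝ ℂ))ᴴ = Mᵀ.map (algebraMap ℝ ℂ) := by
  ext i j
  simp [conjTranspose_apply, Complex.conj_ofReal]

lemma schur_of_lyap {n : ℕ} {M P : Matrix (Fin n) (Fin n) ℝ} (hP : P.PosDef)
    (hS : (P - M * P * Mᵀ).PosDef) :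
    ∀ μ ∈ spectrum ℂ (M.map (algebraMap ℝ ℂ)), ‖μ‖ < 1 := by
  intro μ hμ
  obtain ⟨x, hx, hxe⟩ := exists_eigvec (conj_mem_spectrum hμ)
  set Mc := M.map (algebraMap ℝ ℂ) with hMc
  set Pc := P.map (algebraMap ℝ ℂ) with hPc
  have hmap : (P - M * P * Mᵀ).map (algebraMap ℝ ℂ) = Pc - Mc * Pc * Mcᴴ := by
    rw [map_ct]
    ext i j
    simp only [hMc, hPc, map_apply, Matrix.sub_apply, mul_apply, transpose_apply,
      Complex.coe_algebraMap]
    push_cast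
    ring
  have h1 : star x ᵥ* Mc = μ • star x := by
    have : star x ᵥ* (Mcᴴ)ᴴ = star (Mcᴴ *ᵥ x) := (star_mulVec _ _).symm
    rw [conjTranspose_conjTranspose] at this
    rw [this, hxe, star_smul]
    simp
  have hterm : star x ⬝ᵥ ((Mc * Pc * Mcᴴ) *ᵥ x)
      = μ * ((starRingEnd ℂ) μ) * (star x ⬝ᵥ (Pc *ᵥ x)) := by
    calc star x ⬝ᵥ ((Mc * Pc * Mcᴴ) *ᵥ x)
        = star x ⬝ᵥ (Mc *ᵥ ((Pc * Mcᴴ) *ᵥ x)) := by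
          rw [mulVec_mulVec, Matrix.mul_assoc]
      _ = (star x ᵥ* Mc) ⬝ᵥ ((Pc * Mcᴴ) *ᵥ x) := by rw [dotProduct_mulVec]
      _ = (μ • star x) ⬝ᵥ (Pc *ᵥ (Mcᴴ *ᵥ x)) := by rw [h1, mulVec_mulVec]
      _ = μ * (star x ⬝ᵥ (Pc *ᵥ ((starRingEnd ℂ) μ • x))) := by
          rw [hxe, smul_dotProduct, smul_eq_mul]
      _ = μ * ((starRingEnd ℂ) μ) * (star x ⬝ᵥ (Pc *ᵥ x)) := by
          rw [mulVec_smul, dotProduct_smul, smul_eq_mul]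
          ring
  have hq := posdef_cquad hP hx
  have hs := posdef_cquad hS hx
  rw [hmap] at hs
  have hsplit : star x ⬝ᵥ ((Pc - Mc * Pc * Mcᴴ) *ᵥ x)
      = star x ⬝ᵥ (Pc *ᵥ x) - μ * ((starRingEnd ℂ) μ) * (star x ⬝ᵥ (Pc *ᵥ x)) := by
    rw [sub_mulVec, dotProduct_sub, hterm]
  rw [hsplit] at hs
  have hmu : μ * ((starRingEnd ℂ) μ) = ((‖μ‖^2 : ℝ) : ℂ) := by
    rw [Complex.mul_conj]
    norm_cast
    rw [Complex.normSq_eq_norm_sq]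
  rw [hmu] at hs
  rw [Complex.sub_re, Complex.re_ofReal_mul] at hs
  rw [← hPc] at hq
  have hlt : ‖μ‖^2 < 1 := by nlinarith
  nlinarith [norm_nonneg μ, sq_nonneg (‖μ‖ - 1)]

set_option maxHeartbeats 1000000 in
/-- "If" direction of Theorem 2: feasibility of the data-based LMI implies that
`K := LP⁻¹` stabilizes all systems `(A,B)` explaining the noise-free data. -/

theorem data_driven_stabilization_if {n m T : ℕ}
    (Xm Xp : Matrix (Fin n) (Fin T) ℝ) (Um : Matrix (Fin m) (Fin T) ℝ)
    (P : Matrix (Fin n) (Fin n) ℝ) (L : Matrix (Fin m) (Fin n) ℝ) (β : ℝ)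
    (hP : P.PosDef) (hβ : 0 < β)
    (hLMI :
      (fromBlocks
        (fromBlocks (P - β • (1 : Matrix (Fin n) (Fin n) ℝ)) 0 0 (-P))
        (fromBlocks 0 0 (-Lᵀ) 0)
        (fromBlocks 0 (-L) 0 0)
        (fromBlocks 0 L Lᵀ P) +
       fromRows (fromRows Xp (-Xm)) (fromRows (-Um) (0 : Matrix (Fin n) (Fin T) ℝ)) *
        (fromRows (fromRows Xp (-Xm)) (fromRows (-Um) (0 : Matrix (Fin n) (Fin T) ℝ)))ᵀ).PosSemidef) :
    ∀ (A : Matrix (Fin n) (Fin n) ℝ) (B : Matrix (Fin n) (Fin m) ℝ),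
      Xp = A * Xm + B * Um →
      (P - (A + B * (L * P⁻¹)) * P * (A + B * (L * P⁻¹))ᵀ -
        β • (1 : Matrix (Fin n) (Fin n) ℝ)).PosSemidef ∧
      ∀ μ ∈ spectrum ℂ ((A + B * (L * P⁻¹)).map (algebraMap ℝ ℂ)), ‖μ‖ < 1 := by
  intro A B hdata
  have hdet : IsUnit P.det := hP.det_pos.ne'.isUnit
  set K := L * P⁻¹ with hK
  have hKP : K * P = L := by
    rw [hK, Matrix.mul_assoc, Matrix.nonsing_inv_mul P hdet, Matrix.mul_one]
  have hPt : Pᵀ = P := by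
    have h := hP.isHermitian
    ext i j
    simpa [conjTranspose_apply] using congrFun (congrFun h i) j
  set w₁ : Matrix (Fin n) (Fin n ⊕ Fin n) ℝ := fromCols 1 A with hw₁
  set w₂ : Matrix (Fin n) (Fin m ⊕ Fin n) ℝ := fromCols B (-(B * K)) with hw₂
  set w := fromCols w₁ w₂ with hw
  have hwH : wᴴ = wᵀ := by
    ext i j
    simp [conjTranspose_apply]
  have hpsd := hLMI.mul_mul_conjTranspose_same w
  rw [hwH] at hpsd
  set V := fromRows (fromRows Xp (-Xm)) (fromRows (-Um) (0 : Matrix (Fin n) (Fin T) ℝ)) with hV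
  have hwv : w * V = 0 := by
    rw [hw, hV, fromCols_mul_fromRows, hw₁, hw₂, fromCols_mul_fromRows,
      fromCols_mul_fromRows]
    simp only [Matrix.one_mul, Matrix.mul_neg, Matrix.mul_zero, hdata]
    abel
  have hmain : w * (fromBlocks
        (fromBlocks (P - β • (1 : Matrix (Fin n) (Fin n) ℝ)) 0 0 (-P))
        (fromBlocks 0 0 (-Lᵀ) 0)
        (fromBlocks 0 (-L) 0 0)
        (fromBlocks 0 L Lᵀ P) + V * Vᵀ) * wᵀ
      = P - (A + B * K) * P * (A + B * K)ᵀ - β • (1 : Matrix (Fin n) (Fin n) ℝ) := by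
    rw [Matrix.mul_add, Matrix.add_mul, ← Matrix.mul_assoc w V Vᵀ, hwv, Matrix.zero_mul,
      Matrix.zero_mul, add_zero]
    rw [hw, hw₁, hw₂]
    rw [fromCols_mul_fromBlocks, transpose_fromCols, fromCols_mul_fromRows,
      transpose_fromCols, transpose_fromCols,
      Matrix.add_mul, Matrix.add_mul,
      fromCols_mul_fromBlocks, fromCols_mul_fromBlocks,
      fromCols_mul_fromBlocks, fromCols_mul_fromBlocks,
      fromCols_mul_fromRows, fromCols_mul_fromRows,
      fromCols_mul_fromRows, fromCols_mul_fromRows]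
    rw [← hKP, sub_right_comm]
    set E := P - β • (1 : Matrix (Fin n) (Fin n) ℝ) with hE
    simp only [Matrix.one_mul, Matrix.mul_one, Matrix.mul_zero, Matrix.zero_mul,
      Matrix.mul_neg, Matrix.neg_mul, add_zero, zero_add, transpose_add, transpose_mul,
      transpose_neg, transpose_one, hPt, neg_zero, neg_neg]
    noncomm_ring
    simp only [Matrix.mul_assoc]
    abel
  rw [hmain] at hpsd
  refine ⟨hpsd, ?_⟩
  have hlyap : (P - (A + B * K) * P * (A + B * K)ᵀ).PosDef := by
    have hβ1 : (β • (1 : Matrix (Fin n) (Fin n) ℝ)).PosDef := by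
      rw [posDef_iff_dotProduct_mulVec]
      constructor
      · simp [IsHermitian]
      · intro x hx
        have : star x ⬝ᵥ ((β • (1 : Matrix (Fin n) (Fin n) ℝ)) *ᵥ x) = β * (star x ⬝ᵥ x) := by
          simp [smul_mulVec, dotProduct_smul]
        rw [this]
        have h0 : (0:ℝ) < star x ⬝ᵥ x := by
          simpa using (Matrix.PosDef.one (n := Fin n) (R := ℝ)).dotProduct_mulVec_pos hx
        positivity
    have := Matrix.PosDef.posSemidef_add hpsd hβ1
    simpa using this
  exact schur_of_lyap hP hlyap
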